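/- The equation AΣA = Σ' for A ∈ S⁺ⁿ, with Σ, Σ' ∈ S⁺ⁿ given, has the unique symmetric positive definite solution A = Σ^{-1/2}(Σ^{1/2}Σ'Σ^{1/2})^{1/2}Σ^{-1/2}. -/

import Mathlib

open Matrix

section

open scoped ComplexOrder

/-- The positive semidefinite square root, as defined in Mathlib of December 2024
(`Matrix.PosSemidef.sqrt`, since removed from Mathlib). -/
noncomputable def Matrix.PosSemidef.sqrt {n : Type*} [Fintype n] [DecidableEq n]
    {𝕜 : Type*} [RCLike 𝕜] {A : Matrix n n 𝕜} (hA : A.PosSemidef) : Matrix n n 𝕜 :=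
  hA.1.eigenvectorUnitary.1 * diagonal ((↑) ∘ (√·) ∘ hA.1.eigenvalues) *
  (star hA.1.eigenvectorUnitary : Matrix n n 𝕜)

end

section

open scoped MatrixOrder

lemma Matrix.PosSemidef.sqrt_eq_cfcSqrt {n : ℕ} {M : Matrix (Fin n) (Fin n) ℝ}
    (hM : M.PosSemidef) : hM.sqrt = CFC.sqrt M := by
  rw [CFC.sqrt_eq_real_sqrt M hM.nonneg,
    cfcₙ_eq_cfc (hf := Real.continuous_sqrt.continuousOn) (hf0 := Real.sqrt_zero), hM.1.cfc_eq, IsHermitian.cfc, Unitary.conjStarAlgAut_apply]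
  rfl

lemma Matrix.PosSemidef.posSemidef_sqrt {n : ℕ} {M : Matrix (Fin n) (Fin n) ℝ}
    (hM : M.PosSemidef) : hM.sqrt.PosSemidef := by
  rw [hM.sqrt_eq_cfcSqrt]
  exact nonneg_iff_posSemidef.mp (CFC.sqrt_nonneg M)

lemma Matrix.PosSemidef.sqrt_mul_self {n : ℕ} {M : Matrix (Fin n) (Fin n) ℝ}
    (hM : M.PosSemidef) : hM.sqrt * hM.sqrt = M := by
  rw [hM.sqrt_eq_cfcSqrt]
  exact CFC.sqrt_mul_sqrt_self M hM.nonneg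

lemma Matrix.PosSemidef.eq_sqrt_of_sq_eq {n : ℕ} {C M : Matrix (Fin n) (Fin n) ℝ}
    (hC : C.PosSemidef) (hM : M.PosSemidef) (h : C ^ 2 = M) : C = hM.sqrt := by
  rw [hM.sqrt_eq_cfcSqrt]
  exact (CFC.sqrt_unique (by rw [← h, pow_two]) hC.nonneg).symm

end

lemma aux_posDef_of_isUnit {n : ℕ} {M : Matrix (Fin n) (Fin n) ℝ}
    (hM : M.PosSemidef) (hu : IsUnit M) : M.PosDef := by
  refine posDef_iff_dotProduct_mulVec.mpr ⟨hM.1, fun x hx => lt_of_le_of_ne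
    ((posSemidef_iff_dotProduct_mulVec.mp hM).2 x) fun h => hx ?_⟩
  have h0 : M *ᵥ x = 0 := (hM.dotProduct_mulVec_zero_iff x).mp h.symm
  have hinj := Matrix.mulVec_injective_iff_isUnit.mpr hu
  have := hinj (a₁ := x) (a₂ := 0) (by simpa using h0)
  simpa using this

lemma aux_key {n : ℕ} (S S' R B A0 : Matrix (Fin n) (Fin n) ℝ)
    (hS : S.PosDef) (hS' : S'.PosDef)
    (hRps : R.PosSemidef) (hRR : R * R = S)
    (hBps : B.PosSemidef) (hBB : B * B = R * S' * R)
    (hBuniq : ∀ C : Matrix (Fin n) (Fin n) ℝ, C.PosSemidef → C * C = R * S' * R → C = B)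
    (hA0 : A0 = R⁻¹ * B * R⁻¹) :
    A0.PosDef ∧ A0 * S * A0 = S' ∧
    (∀ A : Matrix (Fin n) (Fin n) ℝ, A.PosDef → A * S * A = S' → A = A0) := by
  have hdetR : IsUnit R.det := by
    have hdd : R.det * R.det = S.det := by rw [← det_mul, hRR]
    have hS0 : S.det ≠ 0 := ne_of_gt hS.det_pos
    exact isUnit_iff_ne_zero.mpr (fun h => hS0 (by rw [← hdd, h, zero_mul]))
  have hRu : IsUnit R := (isUnit_iff_isUnit_det _).mpr hdetR
  have hRpd : R.PosDef := aux_posDef_of_isUnit hRps hRu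
  have hRH : Rᴴ = R := hRps.1
  have hRiH : (R⁻¹)ᴴ = R⁻¹ := by rw [conjTranspose_nonsing_inv, hRH]
  have hRiR : R⁻¹ * R = 1 := nonsing_inv_mul R hdetR
  have hRRi : R * R⁻¹ = 1 := mul_nonsing_inv R hdetR
  have hBu : IsUnit B := by
    refine (isUnit_iff_isUnit_det _).mpr (isUnit_iff_ne_zero.mpr fun h => ?_)
    have hne : (R * S' * R).det ≠ 0 := by
      rw [det_mul, det_mul]
      exact mul_ne_zero (mul_ne_zero (ne_of_gt hRpd.det_pos) (ne_of_gt hS'.det_pos))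
        (ne_of_gt hRpd.det_pos)
    exact hne (by rw [← hBB, det_mul, h, zero_mul])
  have hA0ps : A0.PosSemidef := by
    have h := hBps.mul_mul_conjTranspose_same R⁻¹
    rwa [hRiH, ← hA0] at h
  have hRiu : IsUnit R⁻¹ := Matrix.isUnit_nonsing_inv_iff.mpr hRu
  have hA0u : IsUnit A0 := by
    rw [hA0]
    exact (hRiu.mul hBu).mul hRiu
  have hA0pd : A0.PosDef := aux_posDef_of_isUnit hA0ps hA0u
  refine ⟨hA0pd, ?_, ?_⟩
  · rw [hA0, ← hRR]
    calc R⁻¹ * B * R⁻¹ * (R * R) * (R⁻¹ * B * R⁻¹)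
        = R⁻¹ * (B * ((R⁻¹ * R) * (R * R⁻¹)) * B) * R⁻¹ := by
          simp only [Matrix.mul_assoc]
      _ = R⁻¹ * (B * B) * R⁻¹ := by rw [hRiR, hRRi, one_mul, Matrix.mul_one]
      _ = R⁻¹ * (R * S' * R) * R⁻¹ := by rw [hBB]
      _ = (R⁻¹ * R) * S' * (R * R⁻¹) := by simp only [Matrix.mul_assoc]
      _ = S' := by rw [hRiR, hRRi, one_mul, Matrix.mul_one]
  · intro A hApd hASA
    have hRAR : (R * A * R).PosSemidef := by
      have h := hApd.posSemidef.conjTranspose_mul_mul_same R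
      rwa [hRH] at h
    have hsq : (R * A * R) * (R * A * R) = R * S' * R := by
      rw [← hASA, ← hRR]
      simp only [Matrix.mul_assoc]
    have hRARB : R * A * R = B := hBuniq _ hRAR hsq
    calc A = (R⁻¹ * R) * A * (R * R⁻¹) := by rw [hRiR, hRRi, one_mul, Matrix.mul_one]
      _ = R⁻¹ * (R * A * R) * R⁻¹ := by simp only [Matrix.mul_assoc]
      _ = R⁻¹ * B * R⁻¹ := by rw [hRARB]
      _ = A0 := hA0.symm

theorem stmt14 {n : ℕ}
    (S S' : Matrix (Fin n) (Fin n) ℝ) (hS : S.PosDef) (hS' : S'.PosDef)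
    (hmid : (hS.posSemidef.sqrt * S' * hS.posSemidef.sqrt).PosSemidef)
    (A0 : Matrix (Fin n) (Fin n) ℝ)
    (hA0 : A0 = hS.posSemidef.sqrt⁻¹ * hmid.sqrt * hS.posSemidef.sqrt⁻¹) :
    A0.PosDef ∧ A0 * S * A0 = S' ∧
    (∀ A : Matrix (Fin n) (Fin n) ℝ, A.PosDef → A * S * A = S' → A = A0) := by
  exact aux_key S S' hS.posSemidef.sqrt hmid.sqrt A0 hS hS'
    hS.posSemidef.posSemidef_sqrt hS.posSemidef.sqrt_mul_self
    hmid.posSemidef_sqrt hmid.sqrt_mul_self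
    (fun C hC hCC => hC.eq_sqrt_of_sq_eq hmid (by rw [pow_two, hCC]))
    hA0
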